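/- Let G be a *-graph in which every vertex has even degree. Then G contains a Vassiliev obstruct if and only if there exists a partition of the edge set of G into edge-disjoint cycles such that two of the cycles of the partition have exactly one crossing with each other. -/

import Mathlib

/-!
We model a finite multigraph combinatorially by its half-edges ("darts"):
`edgeInv` is a fixed-point-free involution pairing the two darts of each edge,
and the vertices are the cycles of the permutation `rot`; the cycle of `rot`
through a dart is a chosen orientation of the unoriented cyclic order
(the *-structure) at that vertex.  All notions defined below are invariant
under reversing the chosen orientation at a vertex, so such a structure
faithfully represents a *-graph.  An embedding of the graph into the sphere
(equivalently, the plane) is modelled, as usual in topological graph theory,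
by a rotation system whose Euler characteristic is `2` on every connected
component; it is a *-embedding when the rotation at each vertex agrees with
the *-structure or with its reversal.
-/

/-- A *-graph, encoded by half-edges (darts). -/
structure StarGraph where
  /-- the type of darts (half-edges) -/
  D : Type
  [fintypeD : Fintype D]
  [decEqD : DecidableEq D]
  /-- the fixed-point-free involution matching the two darts of each edge -/
  edgeInv : Equiv.Perm D
  /-- a permutation whose cycles are the vertices; its cycle through a dart is a
  chosen orientation of the unoriented cyclic order (*-structure) at that vertex -/
  rot : Equiv.Perm D
  edgeInv_invol : ∀ d, edgeInv (edgeInv d) = d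
  edgeInv_ne : ∀ d, edgeInv d ≠ d

attribute [instance] StarGraph.fintypeD StarGraph.decEqD

namespace StarGraph

variable (G : StarGraph)

/-- Two darts emanate from the same vertex iff they lie on the same cycle of `rot`. -/
def SameVertex (d e : G.D) : Prop := G.rot.SameCycle d e

/-- The degree of the vertex from which the dart `d` emanates. -/
noncomputable def degree (d : G.D) : ℕ := Nat.card {e : G.D // G.SameVertex d e}

/-- The number of cycles (orbits, including fixed points) of a permutation. -/
noncomputable def cycleCount {α : Type*} (f : Equiv.Perm α) : ℕ :=
  Nat.card (Quotient (Equiv.Perm.SameCycle.setoid f))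

/-- The number of vertices. -/
noncomputable def numVertices : ℕ := cycleCount G.rot

/-- The number of edges. -/
noncomputable def numEdges : ℕ := Fintype.card G.D / 2

/-- The number of connected components. -/
noncomputable def numComponents : ℕ :=
  Nat.card (Quotient (Relation.EqvGen.setoid (fun d e : G.D => e = G.rot d ∨ e = G.edgeInv d)))

/-- The number of faces of the embedding determined by the rotation system `ρ`:
the number of cycles of the face permutation `ρ * edgeInv`. -/
noncomputable def numFaces (ρ : Equiv.Perm G.D) : ℕ := cycleCount (ρ * G.edgeInv)

/-- `ρ` is a rotation system compatible with the *-structure:  at each vertex it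
agrees with the chosen orientation of the cyclic order or with its reversal. -/
def IsCompatibleRotation (ρ : Equiv.Perm G.D) : Prop :=
  ∀ d : G.D, (∀ e, G.SameVertex d e → ρ e = G.rot e) ∨
             (∀ e, G.SameVertex d e → ρ e = G.rot⁻¹ e)

/-- `ρ` is a rotation system describing a *-embedding of `G` into the sphere
(equivalently, the plane): it is compatible with the *-structure and has Euler
characteristic `2` on each connected component. -/
def IsPlanarStarEmbedding (ρ : Equiv.Perm G.D) : Prop :=
  G.IsCompatibleRotation ρ ∧
    (G.numVertices : ℤ) - G.numEdges + G.numFaces ρ = 2 * G.numComponents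

/-- `G` admits a *-embedding into the plane. -/
def StarPlanar : Prop := ∃ ρ : Equiv.Perm G.D, G.IsPlanarStarEmbedding ρ

end StarGraph

/-- A cycle in the sense of Vassiliev's planarity criterion: a closed walk,
recorded by the cyclically ordered sequence of darts it traverses, that repeats
no edge (repeated vertices are allowed). -/
structure ClosedTrail (G : StarGraph) where
  /-- the number of edges of the cycle -/
  len : ℕ
  len_pos : 0 < len
  /-- the dart along which the walk leaves its `i`-th vertex -/
  dart : ZMod len → G.D
  /-- the walk is closed: the head of each traversed edge is the tail of the next -/
  next_sameVertex : ∀ i, G.SameVertex (G.edgeInv (dart i)) (dart (i + 1))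
  /-- no edge is repeated -/
  edges_injective : ∀ i j, (dart i = dart j ∨ dart i = G.edgeInv (dart j)) → i = j

/-- Two closed trails have no common edge. -/
def ClosedTrail.EdgeDisjoint {G : StarGraph} (A B : ClosedTrail G) : Prop :=
  ∀ i j, A.dart i ≠ B.dart j ∧ A.dart i ≠ G.edgeInv (B.dart j)

/-- The least positive number of steps needed to get from `x` to `y` along the
permutation `σ` (junk value `0` if `y` is not on the cycle of `x`). -/
noncomputable def stepsTo {α : Type*} (σ : Equiv.Perm α) (x y : α) : ℕ :=
  sInf {m : ℕ | 0 < m ∧ (σ ^ m) x = y}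

/-- The four darts `a₁, a₂, b₁, b₂`, lying on one cycle of `σ`, appear in this
cycle in alternating order: starting at `a₁`, one of `b₁, b₂` is met strictly
before `a₂` and the other strictly after.  This is invariant under replacing
`σ` by `σ⁻¹`, i.e. it only depends on the unoriented cyclic order. -/
def Alternating {α : Type*} (σ : Equiv.Perm α) (a₁ a₂ b₁ b₂ : α) : Prop :=
  (stepsTo σ a₁ b₁ < stepsTo σ a₁ a₂ ∧ stepsTo σ a₁ a₂ < stepsTo σ a₁ b₂) ∨
  (stepsTo σ a₁ b₂ < stepsTo σ a₁ a₂ ∧ stepsTo σ a₁ a₂ < stepsTo σ a₁ b₁)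

/-- The pair of passes `(i, j)` is a crossing of the closed trails `A` and `B`:
at its `i`-th step `A` passes through a vertex `v` along the half-edges
`A₁ = edgeInv (A.dart (i-1))` (incoming) and `A₂ = A.dart i` (outgoing), `B`
passes through the same vertex `v` at its `j`-th step along `B₁, B₂`, and
`A₁, B₁, A₂, B₂` alternate in the cyclic order at `v`.  Counting crossings
means counting such pairs `(i, j)`, i.e. crossings are counted with
multiplicity. -/
def ClosedTrail.IsCrossing {G : StarGraph} (A B : ClosedTrail G)
    (p : ZMod A.len × ZMod B.len) : Prop :=
  G.SameVertex (A.dart p.1) (B.dart p.2) ∧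
  Alternating G.rot (G.edgeInv (A.dart (p.1 - 1))) (A.dart p.1)
    (G.edgeInv (B.dart (p.2 - 1))) (B.dart p.2)

/-- A Vassiliev obstruct: a pair of edge-disjoint cycles having exactly one
crossing (with multiplicity). -/
def HasVassilievObstruct (G : StarGraph) : Prop :=
  ∃ A B : ClosedTrail G, A.EdgeDisjoint B ∧
    Nat.card {p : ZMod A.len × ZMod B.len // A.IsCrossing B p} = 1



section AuxEuler

attribute [local instance 10] Classical.propDecidable

namespace StarGraph
variable (G : StarGraph)

lemma sv_refl (d : G.D) : G.SameVertex d d := Equiv.Perm.SameCycle.refl _ _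

lemma sv_symm {d e : G.D} (h : G.SameVertex d e) : G.SameVertex e d := h.symm

lemma sv_trans {d e f : G.D} (h : G.SameVertex d e) (h' : G.SameVertex e f) :
    G.SameVertex d f := h.trans h'

lemma inv_inj : Function.Injective G.edgeInv := G.edgeInv.injective

lemma inv_eq_iff {d e : G.D} : G.edgeInv d = e ↔ d = G.edgeInv e := by
  constructor <;> rintro rfl
  · rw [G.edgeInv_invol]
  · rw [G.edgeInv_invol]

/-- The local degree of the vertex of `d` within a set `S` of darts. -/
noncomputable def vdegF (S : Finset G.D) (d : G.D) : ℕ :=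
  (S.filter (fun e => G.SameVertex d e)).card

lemma vdegF_union {S T : Finset G.D} (h : Disjoint S T) (d : G.D) :
    G.vdegF (S ∪ T) d = G.vdegF S d + G.vdegF T d := by
  unfold vdegF
  rw [Finset.filter_union, Finset.card_union_of_disjoint]
  exact Finset.disjoint_filter_filter h

lemma vdegF_univ (d : G.D) : G.vdegF Finset.univ d = G.degree d := by
  unfold vdegF degree
  rw [Nat.card_eq_fintype_card, Fintype.card_subtype]

end StarGraph

namespace ClosedTrail
variable {G : StarGraph}

instance (T : ClosedTrail G) : NeZero T.len := ⟨T.len_pos.ne'⟩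

noncomputable def dartsF (T : ClosedTrail G) : Finset G.D :=
  Finset.univ.filter (fun e => ∃ i, T.dart i = e ∨ T.dart i = G.edgeInv e)

lemma mem_dartsF {T : ClosedTrail G} {e : G.D} :
    e ∈ T.dartsF ↔ ∃ i, T.dart i = e ∨ T.dart i = G.edgeInv e := by
  simp [dartsF]

lemma dart_ne_inv (T : ClosedTrail G) (i j) : T.dart i ≠ G.edgeInv (T.dart j) := by
  intro h
  have hij := T.edges_injective i j (Or.inr h)
  subst hij
  exact G.edgeInv_ne (T.dart i) h.symm

lemma dart_injective (T : ClosedTrail G) : Function.Injective T.dart :=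
  fun i j h => T.edges_injective i j (Or.inl h)

lemma inv_mem_dartsF {T : ClosedTrail G} {e : G.D} (h : e ∈ T.dartsF) :
    G.edgeInv e ∈ T.dartsF := by
  rw [mem_dartsF] at h ⊢
  obtain ⟨i, h | h⟩ := h
  · exact ⟨i, Or.inr (by rw [G.edgeInv_invol]; exact h)⟩
  · exact ⟨i, Or.inl h⟩

lemma even_vdegF_dartsF (T : ClosedTrail G) (d : G.D) : Even (G.vdegF T.dartsF d) := by
  unfold StarGraph.vdegF
  set outI := Finset.univ.filter (fun i : ZMod T.len => G.SameVertex d (T.dart i)) with houtI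
  set inI := Finset.univ.filter
    (fun i : ZMod T.len => G.SameVertex d (G.edgeInv (T.dart i))) with hinI
  have hsplit : T.dartsF.filter (fun e => G.SameVertex d e)
      = outI.image T.dart ∪ inI.image (fun i => G.edgeInv (T.dart i)) := by
    ext e
    simp only [Finset.mem_filter, mem_dartsF, Finset.mem_union, Finset.mem_image,
      houtI, hinI, Finset.mem_univ, true_and]
    constructor
    · rintro ⟨⟨i, h | h⟩, hsv⟩
      · exact Or.inl ⟨i, by rw [h]; exact hsv, h⟩
      · have h2 : G.edgeInv (T.dart i) = e := by rw [h, G.edgeInv_invol]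
        exact Or.inr ⟨i, by rw [h2]; exact hsv, h2⟩
    · rintro (⟨i, hi, he⟩ | ⟨i, hi, he⟩)
      · exact ⟨⟨i, Or.inl he⟩, by rw [← he]; exact hi⟩
      · exact ⟨⟨i, Or.inr (by rw [← he, G.edgeInv_invol])⟩, by rw [← he]; exact hi⟩
  have hdisj : Disjoint (outI.image T.dart) (inI.image (fun i => G.edgeInv (T.dart i))) := by
    rw [Finset.disjoint_left]
    rintro e he he'
    obtain ⟨i, -, rfl⟩ := Finset.mem_image.mp he
    obtain ⟨j, -, hj⟩ := Finset.mem_image.mp he'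
    exact T.dart_ne_inv i j hj.symm
  have hcards : inI.card = outI.card := by
    refine Finset.card_bij' (fun i _ => i + 1) (fun j _ => j - 1) ?_ ?_ ?_ ?_
    · intro a ha
      simp only [hinI, houtI, Finset.mem_filter, Finset.mem_univ, true_and] at ha ⊢
      exact G.sv_trans ha (T.next_sameVertex a)
    · intro a ha
      simp only [hinI, houtI, Finset.mem_filter, Finset.mem_univ, true_and] at ha ⊢
      have := T.next_sameVertex (a - 1)
      rw [sub_add_cancel] at this
      exact G.sv_trans ha (G.sv_symm this)
    · intro a _; exact add_sub_cancel_right a 1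
    · intro a _; exact sub_add_cancel a 1
  have hinj2 : Function.Injective (fun i : ZMod T.len => G.edgeInv (T.dart i)) :=
    fun a b h => T.dart_injective (G.inv_inj h)
  rw [hsplit, Finset.card_union_of_disjoint hdisj,
    Finset.card_image_of_injective outI T.dart_injective,
    Finset.card_image_of_injective inI hinj2, hcards]
  exact Even.add_self _

end ClosedTrail

namespace StarGraph
variable {G : StarGraph}

/-- Two darts are edge-distinct. -/
def Rd (G : StarGraph) (a b : G.D) : Prop := a ≠ b ∧ a ≠ G.edgeInv b ∧ G.edgeInv a ≠ b

/-- A good list: a nonempty trail within `S`. -/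
def GoodL (S : Finset G.D) (L : List G.D) : Prop :=
  L ≠ [] ∧ (∀ e ∈ L, e ∈ S) ∧ L.Pairwise (Rd G) ∧
    L.Chain' (fun a b => G.SameVertex (G.edgeInv a) b)

lemma chain'_iff_get_compat {α : Type*} {R : α → α → Prop} {l : List α} :
    l.Chain' R ↔ ∀ (i : ℕ) (h : i < l.length - 1),
      R (l.get ⟨i, by omega⟩) (l.get ⟨i + 1, by omega⟩) := by
  unfold List.Chain'
  rw [List.isChain_iff_getElem]
  constructor
  · intro h i hi; simpa using h i (by omega)
  · intro h i hi; simpa using h i (by omega)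

lemma goodL_length_le {S : Finset G.D} {L : List G.D} (h : GoodL S L) :
    L.length ≤ S.card := by
  have hnd : L.Nodup := h.2.2.1.imp (fun h => h.1)
  calc L.length = L.toFinset.card := (List.toFinset_card_of_nodup hnd).symm
    _ ≤ S.card := Finset.card_le_card (fun e he => h.2.1 e (List.mem_toFinset.mp he))

lemma trail_of_list (L : List G.D) (hne : L ≠ [])
    (hp : L.Pairwise (Rd G))
    (hc : L.Chain' (fun a b => G.SameVertex (G.edgeInv a) b))
    (hcl : G.SameVertex (G.edgeInv (L.getLast hne)) (L.get ⟨0, List.length_pos_iff.mpr hne⟩)) :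
    ∃ T : ClosedTrail G, ∀ i, T.dart i ∈ L := by
  have hn : 0 < L.length := List.length_pos_iff.mpr hne
  haveI : NeZero L.length := ⟨hn.ne'⟩
  have key : ∀ i : ZMod L.length, (i + 1).val = (i.val + 1) % L.length := by
    intro i
    conv_lhs => rw [← ZMod.natCast_zmod_val i]
    rw [← Nat.cast_one, ← Nat.cast_add, ZMod.val_natCast]
  refine ⟨⟨L.length, hn, fun k => L.get ⟨k.val, ZMod.val_lt k⟩, ?_, ?_⟩, ?_⟩
  · intro i
    by_cases hv : i.val + 1 < L.length
    · have h1 : ((⟨(i+1).val, ZMod.val_lt _⟩ : Fin L.length)) = ⟨i.val + 1, hv⟩ := by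
        apply Fin.ext
        simp only [key i]
        exact Nat.mod_eq_of_lt hv
      show G.SameVertex _ (L.get ⟨(i+1).val, ZMod.val_lt _⟩)
      rw [h1]
      simpa using (List.isChain_iff_getElem.mp hc) i.val (by omega)
    · have hlast : i.val = L.length - 1 := by have := ZMod.val_lt i; omega
      have h1 : ((⟨(i+1).val, ZMod.val_lt _⟩ : Fin L.length)) = ⟨0, hn⟩ := by
        apply Fin.ext
        simp only [key i, hlast]
        have h2 : (L.length - 1 + 1) = L.length := by omega
        rw [h2, Nat.mod_self]
      have h2 : ((⟨i.val, ZMod.val_lt _⟩ : Fin L.length))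
          = ⟨L.length - 1, by omega⟩ := Fin.ext hlast
      show G.SameVertex (G.edgeInv (L.get ⟨i.val, ZMod.val_lt _⟩))
        (L.get ⟨(i+1).val, ZMod.val_lt _⟩)
      rw [h1, h2, ← (by simp [List.getLast_eq_getElem] : L.getLast hne = L.get ⟨L.length - 1, by omega⟩)]
      exact hcl
  · intro i j hor
    rcases lt_trichotomy i.val j.val with h | h | h
    · have hr := (List.pairwise_iff_get.mp hp) ⟨i.val, ZMod.val_lt i⟩ ⟨j.val, ZMod.val_lt j⟩ h
      rcases hor with h1 | h1
      · exact absurd h1 hr.1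
      · exact absurd h1 hr.2.1
    · exact ZMod.val_injective _ h
    · have hr := (List.pairwise_iff_get.mp hp) ⟨j.val, ZMod.val_lt j⟩ ⟨i.val, ZMod.val_lt i⟩ h
      rcases hor with h1 | h1
      · exact absurd h1.symm hr.1
      · exact absurd h1.symm hr.2.2
  · intro i
    exact List.get_mem L _

lemma extend_or_closed (S : Finset G.D) (hinv : ∀ e ∈ S, G.edgeInv e ∈ S)
    (hev : ∀ d, Even (G.vdegF S d)) (L : List G.D) (hg : GoodL S L) :
    G.SameVertex (G.edgeInv (L.getLast hg.1)) (L.get ⟨0, List.length_pos_iff.mpr hg.1⟩) ∨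
      ∃ e, GoodL S (L ++ [e]) := by
  obtain ⟨hne, hmem, hp, hc⟩ := hg
  have hn : 0 < L.length := List.length_pos_iff.mpr hne
  by_cases hcl : G.SameVertex (G.edgeInv (L.getLast hne)) (L.get ⟨0, hn⟩)
  · exact Or.inl hcl
  right
  set a := L.getLast hne with ha
  set Q : G.D → Prop := fun e => G.SameVertex (G.edgeInv a) e with hQ
  set outI := Finset.univ.filter (fun i : Fin L.length => Q (L.get i)) with houtI
  set inI := Finset.univ.filter (fun i : Fin L.length => Q (G.edgeInv (L.get i))) with hinI
  set Used := S.filter (fun e => Q e ∧ (e ∈ L ∨ G.edgeInv e ∈ L)) with hUsed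
  have hgetinj : Function.Injective (L.get) := by
    rw [← List.nodup_iff_injective_get]
    exact hp.imp (fun h => h.1)
  have hsplit : Used = outI.image L.get ∪ inI.image (fun i => G.edgeInv (L.get i)) := by
    ext e
    simp only [hUsed, Finset.mem_filter, Finset.mem_union, Finset.mem_image,
      houtI, hinI, Finset.mem_univ, true_and]
    constructor
    · rintro ⟨hS, hQe, he | he⟩
      · obtain ⟨i, hi⟩ := List.mem_iff_get.mp he
        exact Or.inl ⟨i, by rw [hi]; exact hQe, hi⟩
      · obtain ⟨i, hi⟩ := List.mem_iff_get.mp he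
        have h2 : G.edgeInv (L.get i) = e := by rw [hi, G.edgeInv_invol]
        exact Or.inr ⟨i, by rw [h2]; exact hQe, h2⟩
    · rintro (⟨i, hQi, he⟩ | ⟨i, hQi, he⟩)
      · refine ⟨hmem e (by rw [← he]; exact List.get_mem L _), by rw [← he]; exact hQi, ?_⟩
        exact Or.inl (by rw [← he]; exact List.get_mem L _)
      · have h2 : G.edgeInv e = L.get i := by rw [← he, G.edgeInv_invol]
        refine ⟨?_, by rw [← he]; exact hQi, Or.inr (by rw [h2]; exact List.get_mem L _)⟩
        have : G.edgeInv e ∈ S := hmem _ (by rw [h2]; exact List.get_mem L _)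
        have := hinv _ this
        rwa [G.edgeInv_invol] at this
  have hRdne : ∀ i j : Fin L.length, L.get i ≠ G.edgeInv (L.get j) := by
    intro i j heq
    rcases lt_trichotomy i j with h | h | h
    · exact ((List.pairwise_iff_get.mp hp) i j h).2.1 heq
    · subst h
      exact G.edgeInv_ne (L.get i) heq.symm
    · exact ((List.pairwise_iff_get.mp hp) j i h).2.2 heq.symm
  have hdisj : Disjoint (outI.image L.get) (inI.image (fun i => G.edgeInv (L.get i))) := by
    rw [Finset.disjoint_left]
    rintro e he he'
    obtain ⟨i, -, rfl⟩ := Finset.mem_image.mp he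
    obtain ⟨j, -, hj⟩ := Finset.mem_image.mp he'
    exact hRdne i j hj.symm
  -- inI has one more element than outI
  have hlastmem : (⟨L.length - 1, by omega⟩ : Fin L.length) ∈ inI := by
    simp only [hinI, Finset.mem_filter, Finset.mem_univ, true_and, hQ]
    rw [← (by simp [List.getLast_eq_getElem] : L.getLast hne = L.get ⟨L.length - 1, by omega⟩), ← ha]
    exact G.sv_refl _
  have h0mem : (⟨0, hn⟩ : Fin L.length) ∉ outI := by
    simp only [houtI, Finset.mem_filter, Finset.mem_univ, true_and, hQ]
    exact hcl
  have hcards : inI.card = outI.card + 1 := by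
    have hbij : (inI.erase ⟨L.length - 1, by omega⟩).card
        = (outI.erase ⟨0, hn⟩).card := by
      refine Finset.card_bij'
        (fun i _ => if h : (i : ℕ) + 1 < L.length then ⟨(i : ℕ) + 1, h⟩ else ⟨0, hn⟩)
        (fun j _ => ⟨(j : ℕ) - 1, by omega⟩) ?_ ?_ ?_ ?_
      · intro i hi
        try dsimp only
        rw [Finset.mem_erase] at hi
        obtain ⟨hine, hiI⟩ := hi
        have hlt : (i : ℕ) + 1 < L.length := by
          have h1 : (i : ℕ) < L.length := i.isLt
          have h2 : (i : ℕ) ≠ L.length - 1 := fun h => hine (Fin.ext h)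
          omega
        rw [dif_pos hlt, Finset.mem_erase]
        constructor
        · simp only [ne_eq, Fin.mk.injEq]
          omega
        · simp only [houtI, Finset.mem_filter, Finset.mem_univ, true_and]
          simp only [hinI, Finset.mem_filter, Finset.mem_univ, true_and] at hiI
          have hch := (chain'_iff_get_compat.mp hc) (i : ℕ) (by omega)
          refine G.sv_trans hiI ?_
          have : (⟨(i : ℕ), by omega⟩ : Fin L.length) = i := Fin.ext rfl
          rw [this] at hch
          exact hch
      · intro j hj
        try dsimp only
        rw [Finset.mem_erase] at hj
        obtain ⟨hjne, hjI⟩ := hj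
        have hj0 : (j : ℕ) ≠ 0 := by
          intro h
          exact hjne (Fin.ext h)
        have hjlt : (j : ℕ) < L.length := j.isLt
        rw [Finset.mem_erase]
        constructor
        · simp only [ne_eq, Fin.mk.injEq]
          omega
        · simp only [hinI, Finset.mem_filter, Finset.mem_univ, true_and]
          simp only [houtI, Finset.mem_filter, Finset.mem_univ, true_and] at hjI
          have hch := (chain'_iff_get_compat.mp hc) ((j : ℕ) - 1) (by omega)
          have hidx : (⟨(j : ℕ) - 1 + 1, by omega⟩ : Fin L.length) = j :=
            Fin.ext (by simp only [Fin.val_mk]; omega)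
          rw [hidx] at hch
          exact G.sv_trans hjI (G.sv_symm hch)
      · intro i hi
        try dsimp only
        rw [Finset.mem_erase] at hi
        have hlt : (i : ℕ) + 1 < L.length := by
          have h1 : (i : ℕ) < L.length := i.isLt
          have h2 : (i : ℕ) ≠ L.length - 1 := fun h => hi.1 (Fin.ext h)
          omega
        rw [dif_pos hlt]
        exact Fin.ext (by simp)
      · intro j hj
        try dsimp only
        rw [Finset.mem_erase] at hj
        have hj0 : (j : ℕ) ≠ 0 := fun h => hj.1 (Fin.ext h)
        have hjlt : (j : ℕ) < L.length := j.isLt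
        have hlt : (j : ℕ) - 1 + 1 < L.length := by omega
        rw [dif_pos hlt]
        apply Fin.ext
        simp only [Fin.val_mk]
        omega
    rw [← Finset.card_erase_add_one hlastmem, hbij, Finset.erase_eq_of_notMem h0mem]
  have hUsedcard : Used.card = 2 * outI.card + 1 := by
    rw [hsplit, Finset.card_union_of_disjoint hdisj,
      Finset.card_image_of_injective outI hgetinj,
      Finset.card_image_of_injective inI (fun x y h => hgetinj (G.inv_inj h)), hcards]
    omega
  have hsub : Used ⊆ S.filter Q := by
    apply Finset.monotone_filter_right
    intro e _ he
    exact he.1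
  have hAll : Even ((S.filter Q).card) := by
    have := hev (G.edgeInv a)
    unfold vdegF at this
    exact this
  have hne2 : Used ≠ S.filter Q := by
    intro h
    rw [h] at hUsedcard
    obtain ⟨k, hk⟩ := hAll
    omega
  obtain ⟨e, heAll, heU⟩ := Finset.exists_of_ssubset
    ((Finset.ssubset_iff_subset_ne).mpr ⟨hsub, hne2⟩)
  rw [Finset.mem_filter] at heAll
  obtain ⟨heS, heQ⟩ := heAll
  have hnotused : ¬ (e ∈ L ∨ G.edgeInv e ∈ L) := by
    intro h
    exact heU (Finset.mem_filter.mpr ⟨heS, heQ, h⟩)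
  push_neg at hnotused
  refine ⟨e, by simp, ?_, ?_, ?_⟩
  · intro x hx
    rcases List.mem_append.mp hx with h | h
    · exact hmem x h
    · rw [List.mem_singleton.mp h]; exact heS
  · rw [List.pairwise_append]
    refine ⟨hp, List.pairwise_singleton _ _, ?_⟩
    intro x hx y hy
    rw [List.mem_singleton.mp hy]
    exact ⟨fun h => hnotused.1 (h ▸ hx), fun h => hnotused.2 (h ▸ hx),
      fun h => hnotused.2 (by rw [← h, G.edgeInv_invol]; exact hx)⟩
  · rw [List.Chain', List.isChain_append]
    refine ⟨hc, List.isChain_singleton _, ?_⟩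
    intro x hx y hy
    rw [List.getLast?_eq_getLast hne, Option.mem_some_iff] at hx
    rw [List.head?_cons, Option.mem_some_iff] at hy
    rw [← hx, ← hy]
    exact heQ

end StarGraph

namespace StarGraph
variable {G : StarGraph}

lemma exists_trail (S : Finset G.D) (hinv : ∀ e ∈ S, G.edgeInv e ∈ S)
    (hev : ∀ d, Even (G.vdegF S d)) (hne : S.Nonempty) :
    ∃ T : ClosedTrail G, ∀ i, T.dart i ∈ S := by
  obtain ⟨d₀, hd₀⟩ := hne
  suffices h : ∀ k (L : List G.D), GoodL S L → S.card ≤ L.length + k →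
      ∃ T : ClosedTrail G, ∀ i, T.dart i ∈ S by
    refine h S.card [d₀] ⟨by simp, by simpa using hd₀, by simp, by simp [List.Chain']⟩ ?_
    simp only [List.length_singleton]
    omega
  intro k
  induction k with
  | zero =>
    intro L hg hb
    rcases extend_or_closed S hinv hev L hg with hcl | ⟨e, he⟩
    · obtain ⟨T, hT⟩ := trail_of_list L hg.1 hg.2.2.1 hg.2.2.2 hcl
      exact ⟨T, fun i => hg.2.1 _ (hT i)⟩
    · have h1 := goodL_length_le he
      simp only [List.length_append, List.length_singleton] at h1
      omega
  | succ k ih =>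
    intro L hg hb
    rcases extend_or_closed S hinv hev L hg with hcl | ⟨e, he⟩
    · obtain ⟨T, hT⟩ := trail_of_list L hg.1 hg.2.2.1 hg.2.2.2 hcl
      exact ⟨T, fun i => hg.2.1 _ (hT i)⟩
    · refine ih (L ++ [e]) he ?_
      simp only [List.length_append, List.length_singleton]
      omega

lemma dartsF_subset {T : ClosedTrail G} {S : Finset G.D}
    (hinv : ∀ e ∈ S, G.edgeInv e ∈ S) (h : ∀ i, T.dart i ∈ S) : T.dartsF ⊆ S := by
  intro e he
  rw [ClosedTrail.mem_dartsF] at he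
  obtain ⟨i, hi | hi⟩ := he
  · exact hi ▸ h i
  · have h2 : G.edgeInv (T.dart i) ∈ S := hinv _ (h i)
    rw [hi, G.edgeInv_invol] at h2
    exact h2

lemma edgeDisjoint_of_not_mem {T₀ T₁ : ClosedTrail G} (h : ∀ k, T₁.dart k ∉ T₀.dartsF) :
    T₀.EdgeDisjoint T₁ ∧ T₁.EdgeDisjoint T₀ := by
  constructor
  · intro i j
    exact ⟨fun he => h j (ClosedTrail.mem_dartsF.mpr ⟨i, Or.inl he⟩),
      fun he => h j (ClosedTrail.mem_dartsF.mpr ⟨i, Or.inr he⟩)⟩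
  · intro i j
    refine ⟨fun he => h i (ClosedTrail.mem_dartsF.mpr ⟨j, Or.inl he.symm⟩),
      fun he => h i (ClosedTrail.mem_dartsF.mpr ⟨j, Or.inr ?_⟩)⟩
    rw [he, G.edgeInv_invol]

lemma edgeDisjoint_symm {A B : ClosedTrail G} (h : A.EdgeDisjoint B) : B.EdgeDisjoint A := by
  intro i j
  exact ⟨(h j i).1.symm, fun he => (h j i).2 (by rw [he, G.edgeInv_invol])⟩

lemma decomp : ∀ (N : ℕ) (S : Finset G.D), S.card ≤ N →
    (∀ e ∈ S, G.edgeInv e ∈ S) → (∀ d, Even (G.vdegF S d)) →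
    ∃ (m : ℕ) (T : Fin m → ClosedTrail G),
      (∀ i j, i ≠ j → (T i).EdgeDisjoint (T j)) ∧
      (∀ i k, (T i).dart k ∈ S) ∧
      (∀ e ∈ S, ∃ i k, (T i).dart k = e ∨ (T i).dart k = G.edgeInv e) := by
  intro N
  induction N with
  | zero =>
    intro S hcard hinv hev
    have hS : S = ∅ := Finset.card_eq_zero.mp (Nat.le_zero.mp hcard)
    subst hS
    exact ⟨0, Fin.elim0, fun i => i.elim0, fun i => i.elim0, fun e he => by simp at he⟩
  | succ N ih =>
    intro S hcard hinv hev
    by_cases hS : S.Nonempty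
    · obtain ⟨T₀, hT₀⟩ := exists_trail S hinv hev hS
      have hsub : T₀.dartsF ⊆ S := dartsF_subset hinv hT₀
      set S' := S \ T₀.dartsF with hS'
      have hinv' : ∀ e ∈ S', G.edgeInv e ∈ S' := by
        intro e he
        rw [hS', Finset.mem_sdiff] at he ⊢
        refine ⟨hinv e he.1, fun h => he.2 ?_⟩
        have h2 := ClosedTrail.inv_mem_dartsF h
        rwa [G.edgeInv_invol] at h2
      have hev' : ∀ d, Even (G.vdegF S' d) := by
        intro d
        have hun := G.vdegF_union
          (Finset.sdiff_disjoint : Disjoint S' T₀.dartsF) d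
        rw [Finset.sdiff_union_of_subset hsub] at hun
        have h3 : G.vdegF S' d = G.vdegF S d - G.vdegF T₀.dartsF d :=
          Nat.eq_sub_of_add_eq hun.symm
        rw [h3]
        exact Even.tsub (hev d) (T₀.even_vdegF_dartsF d)
      have hcard' : S'.card ≤ N := by
        have hlt : S'.card < S.card :=
          Finset.card_lt_card (Finset.sdiff_ssubset hsub
            ⟨T₀.dart 0, ClosedTrail.mem_dartsF.mpr ⟨0, Or.inl rfl⟩⟩)
        omega
      obtain ⟨m, T, hdisj, hmem, hcov⟩ := ih S' hcard' hinv' hev'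
      have key : ∀ (i : Fin m) k, (T i).dart k ∉ T₀.dartsF :=
        fun i k h => (Finset.mem_sdiff.mp (hmem i k)).2 h
      set C := (Fin.cons T₀ T : Fin (m + 1) → ClosedTrail G) with hC
      have hclass : ∀ i : Fin (m + 1),
          (i = 0 ∧ C i = T₀) ∨
          ∃ i' : Fin m, i = i'.succ ∧ C i = T i' := by
        intro i
        induction i using Fin.cases with
        | zero => exact Or.inl ⟨rfl, Fin.cons_zero _ _⟩
        | succ i' => exact Or.inr ⟨i', rfl, Fin.cons_succ _ _ _⟩
      refine ⟨m + 1, C, ?_, ?_, ?_⟩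
      · intro i j hij
        rcases hclass i with ⟨hi0, hieq⟩ | ⟨i', hi', hieq⟩ <;>
          rcases hclass j with ⟨hj0, hjeq⟩ | ⟨j', hj', hjeq⟩ <;> rw [hieq, hjeq]
        · exact absurd (hi0.trans hj0.symm) hij
        · exact (edgeDisjoint_of_not_mem (key j')).1
        · exact (edgeDisjoint_of_not_mem (key i')).2
        · refine hdisj i' j' (fun h => hij ?_)
          rw [hi', hj', h]
      · have haux : ∀ (W₁ W₂ : ClosedTrail G), W₁ = W₂ → (∀ k, W₂.dart k ∈ S) →
            ∀ k, W₁.dart k ∈ S := by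
          rintro W₁ W₂ rfl h k
          exact h k
        intro i k
        rcases hclass i with ⟨hi0, hieq⟩ | ⟨i', hi', hieq⟩
        · exact haux _ _ hieq hT₀ k
        · exact haux _ _ hieq (fun k => (Finset.mem_sdiff.mp (hmem i' k)).1) k
      · have haux2 : ∀ (W₁ W₂ : ClosedTrail G) (e : G.D), W₁ = W₂ →
            (∃ k, W₂.dart k = e ∨ W₂.dart k = G.edgeInv e) →
            ∃ k, W₁.dart k = e ∨ W₁.dart k = G.edgeInv e := by
          rintro W₁ W₂ e rfl h
          exact h
        intro e he
        by_cases hd : e ∈ T₀.dartsF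
        · obtain ⟨i, hi⟩ := ClosedTrail.mem_dartsF.mp hd
          refine ⟨0, ?_⟩
          rcases hclass 0 with ⟨-, h0⟩ | ⟨i', hi', -⟩
          · exact haux2 _ _ _ h0 ⟨i, hi⟩
          · exact absurd hi'.symm (Fin.succ_ne_zero i')
        · obtain ⟨i, k, hk⟩ := hcov e (Finset.mem_sdiff.mpr ⟨he, hd⟩)
          exact ⟨i.succ, haux2 _ _ _ (Fin.cons_succ _ _ _) ⟨k, hk⟩⟩
    · rw [Finset.not_nonempty_iff_eq_empty] at hS
      subst hS
      exact ⟨0, Fin.elim0, fun i => i.elim0, fun i => i.elim0, fun e he => by simp at he⟩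

end StarGraph

end AuxEuler

/-- In a *-graph all of whose vertices have even degree, there is a Vassiliev
obstruct if and only if the edge set can be partitioned into edge-disjoint
cycles such that two of the cycles of the partition cross each other exactly
once. -/
theorem hasVassilievObstruct_iff_partition (G : StarGraph)
    (heven : ∀ d : G.D, Even (G.degree d)) :
    HasVassilievObstruct G ↔
      ∃ (n : ℕ) (C : Fin n → ClosedTrail G),
        (∀ i j : Fin n, i ≠ j → (C i).EdgeDisjoint (C j)) ∧
        (∀ d : G.D, ∃ (i : Fin n) (k : ZMod (C i).len),
          (C i).dart k = d ∨ (C i).dart k = G.edgeInv d) ∧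
        ∃ i j : Fin n, i ≠ j ∧
          Nat.card {p : ZMod (C i).len × ZMod (C j).len //
            (C i).IsCrossing (C j) p} = 1 := by
  constructor
  · rintro ⟨A, B, hAB, hcard⟩
    set SA := A.dartsF with hSA
    set SB := B.dartsF with hSB
    have hdisjAB : Disjoint SA SB := by
      rw [Finset.disjoint_left]
      intro e heA heB
      obtain ⟨i, hi⟩ := ClosedTrail.mem_dartsF.mp heA
      obtain ⟨j, hj⟩ := ClosedTrail.mem_dartsF.mp heB
      rcases hi with hi | hi <;> rcases hj with hj | hj
      · exact (hAB i j).1 (hi.trans hj.symm)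
      · exact (hAB i j).2 (by rw [hj, G.edgeInv_invol]; exact hi)
      · exact (hAB i j).2 (by rw [hj]; exact hi)
      · exact (hAB i j).1 (hi.trans hj.symm)
    set S := Finset.univ \ (SA ∪ SB) with hS
    have hmemS : ∀ e, e ∈ S ↔ (e ∉ SA ∧ e ∉ SB) := by
      intro e
      rw [hS]
      simp [Finset.mem_sdiff]
    have hinv : ∀ e ∈ S, G.edgeInv e ∈ S := by
      intro e he
      rw [hmemS] at he ⊢
      constructor
      · intro h
        have h2 := ClosedTrail.inv_mem_dartsF h
        rw [G.edgeInv_invol] at h2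
        exact he.1 h2
      · intro h
        have h2 := ClosedTrail.inv_mem_dartsF h
        rw [G.edgeInv_invol] at h2
        exact he.2 h2
    have hev : ∀ d, Even (G.vdegF S d) := by
      intro d
      have hun := G.vdegF_union
        (Finset.sdiff_disjoint : Disjoint S (SA ∪ SB)) d
      rw [Finset.sdiff_union_of_subset (Finset.subset_univ _)] at hun
      have hun2 := G.vdegF_union hdisjAB d
      have h3 : G.vdegF S d = G.vdegF Finset.univ d - G.vdegF (SA ∪ SB) d :=
        Nat.eq_sub_of_add_eq hun.symm
      rw [h3]
      refine Even.tsub ?_ ?_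
      · rw [G.vdegF_univ]
        exact heven d
      · rw [hun2]
        exact (A.even_vdegF_dartsF d).add (B.even_vdegF_dartsF d)
    obtain ⟨m, T, hdisj, hmem, hcov⟩ := StarGraph.decomp S.card S le_rfl hinv hev
    set C := (Fin.cons A (Fin.cons B T) : Fin (m + 2) → ClosedTrail G) with hC
    have h0 : C 0 = A := Fin.cons_zero _ _
    have h1 : C (Fin.succ 0) = B := by
      rw [hC]
      rw [Fin.cons_succ, Fin.cons_zero]
    have hT : ∀ t : Fin m, C t.succ.succ = T t := by
      intro t
      rw [hC, Fin.cons_succ, Fin.cons_succ]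
    have hclass : ∀ i : Fin (m + 2),
        (C i = A ∧ i = 0) ∨ (C i = B ∧ i = Fin.succ 0) ∨
        ∃ t : Fin m, C i = T t ∧ i = t.succ.succ := by
      intro i
      induction i using Fin.cases with
      | zero => exact Or.inl ⟨h0, rfl⟩
      | succ i' =>
        induction i' using Fin.cases with
        | zero => exact Or.inr (Or.inl ⟨h1, rfl⟩)
        | succ t => exact Or.inr (Or.inr ⟨t, hT t, rfl⟩)
    have keyA : ∀ (t : Fin m) k, (T t).dart k ∉ A.dartsF := by
      intro t k h
      exact ((hmemS _).mp (hmem t k)).1 h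
    have keyB : ∀ (t : Fin m) k, (T t).dart k ∉ B.dartsF := by
      intro t k h
      exact ((hmemS _).mp (hmem t k)).2 h
    refine ⟨m + 2, C, ?_, ?_, 0, Fin.succ 0, (Fin.succ_ne_zero 0).symm, ?_⟩
    · intro i j hij
      rcases hclass i with ⟨hieq, hi⟩ | ⟨hieq, hi⟩ | ⟨t, hieq, hi⟩ <;>
        rcases hclass j with ⟨hjeq, hj⟩ | ⟨hjeq, hj⟩ | ⟨t', hjeq, hj⟩ <;>
        rw [hieq, hjeq]
      · exact absurd (hi.trans hj.symm) hij
      · exact hAB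
      · exact (StarGraph.edgeDisjoint_of_not_mem (keyA t')).1
      · exact StarGraph.edgeDisjoint_symm hAB
      · exact absurd (hi.trans hj.symm) hij
      · exact (StarGraph.edgeDisjoint_of_not_mem (keyB t')).1
      · exact (StarGraph.edgeDisjoint_of_not_mem (keyA t)).2
      · exact (StarGraph.edgeDisjoint_of_not_mem (keyB t)).2
      · refine hdisj t t' (fun h => hij ?_)
        rw [hi, hj, h]
    · have haux2 : ∀ (W₁ W₂ : ClosedTrail G) (e : G.D), W₁ = W₂ →
          (∃ k, W₂.dart k = e ∨ W₂.dart k = G.edgeInv e) →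
          ∃ k, W₁.dart k = e ∨ W₁.dart k = G.edgeInv e := by
        rintro W₁ W₂ e rfl h
        exact h
      intro d
      by_cases hdA : d ∈ SA
      · exact ⟨0, haux2 _ _ _ h0 (ClosedTrail.mem_dartsF.mp hdA)⟩
      by_cases hdB : d ∈ SB
      · exact ⟨Fin.succ 0, haux2 _ _ _ h1 (ClosedTrail.mem_dartsF.mp hdB)⟩
      obtain ⟨t, k, hk⟩ := hcov d ((hmemS d).mpr ⟨hdA, hdB⟩)
      exact ⟨t.succ.succ, haux2 _ _ _ (hT t) ⟨k, hk⟩⟩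
    · rw [h0, h1]
      exact hcard
  · rintro ⟨n, C, hdisj, hcov, i, j, hij, hcard⟩
    exact ⟨C i, C j, hdisj i j hij, hcard⟩
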